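/- arXiv:1806.02408 — 3 statements merged into one kernel-verified Lean document; each statement's English description precedes it below -/
import Mathlib

section
/- Let X be a real Banach space, C ⊆ X closed and convex, and G a compact topological group acting continuously on X by continuous linear maps, with each g ∈ G mapping C into C; let θ be the Haar probability measure on G. Let F : X → ℝ be convex and lower semi-continuous, and suppose u ∈ C is a minimizer of F over C such that F(g·u) = F(u) for all g ∈ G. Then the G-average u_G := ∫_G g·u dθ(g) satisfies: u_G ∈ C, u_G is G-invariant (h·u_G = u_G for all h ∈ G), and u_G is a minimizer of F over C (indeed F(u_G) = F(u) = inf_C F). -/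
open MeasureTheory

/-- Let `X` be a real Banach space, `C ⊆ X` closed and convex, and `G` a compact
topological group acting continuously on `X` by continuous linear maps, with each `g ∈ G` mapping
`C` into `C`; let `θ` be the Haar probability measure on `G`. Let `F : X → ℝ` be convex and lower
semi-continuous, and suppose `u ∈ C` is a minimizer of `F` over `C` with `F (g • u) = F u` for all
`g ∈ G`. Then the `G`-average `u_G := ∫_G g • u dθ(g)` satisfies: `u_G ∈ C`, `u_G` is
`G`-invariant, and `u_G` is a minimizer of `F` over `C` with `F u_G = F u`. -/
theorem exists_invariant_minimizer_convex
    {X : Type*} [NormedAddCommGroup X] [NormedSpace ℝ X] [CompleteSpace X]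
    {G : Type*} [Group G] [TopologicalSpace G] [IsTopologicalGroup G] [CompactSpace G]
    [MeasurableSpace G] [BorelSpace G]
    [DistribMulAction G X] [SMulCommClass G ℝ X] [ContinuousSMul G X]
    (C : Set X) (hCclosed : IsClosed C) (hCconvex : Convex ℝ C)
    (hmaps : ∀ g : G, ∀ x ∈ C, g • x ∈ C)
    (θ : Measure G) [θ.IsHaarMeasure] [θ.IsMulRightInvariant] [IsProbabilityMeasure θ]
    (F : X → ℝ) (hFconv : ConvexOn ℝ Set.univ F) (hFlsc : LowerSemicontinuous F)
    (u : X) (huC : u ∈ C) (hmin : ∀ v ∈ C, F u ≤ F v)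
    (hinv : ∀ g : G, F (g • u) = F u) :
    (∫ g, g • u ∂θ) ∈ C ∧
      (∀ h : G, h • (∫ g, g • u ∂θ) = ∫ g, g • u ∂θ) ∧
      (∀ v ∈ C, F (∫ g, g • u ∂θ) ≤ F v) ∧
      F (∫ g, g • u ∂θ) = F u := by
  have hcont : Continuous fun g : G => g • u := continuous_id.smul continuous_const
  have hint : Integrable (fun g : G => g • u) θ :=
    hcont.integrable_of_hasCompactSupport
      (isCompact_univ.of_isClosed_subset (isClosed_tsupport _) (Set.subset_univ _))
  -- membership in C
  have hmemC : (∫ g, g • u ∂θ) ∈ C :=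
    hCconvex.integral_mem hCclosed (Filter.Eventually.of_forall fun g => hmaps g u huC) hint
  -- membership in the sublevel set
  have hSconv : Convex ℝ {x : X | F x ≤ F u} := by
    simpa using hFconv.convex_le (F u)
  have hSclosed : IsClosed {x : X | F x ≤ F u} := hFlsc.isClosed_preimage (F u)
  have hle : F (∫ g, g • u ∂θ) ≤ F u :=
    hSconv.integral_mem hSclosed
      (Filter.Eventually.of_forall fun g => (hinv g).le) hint
  have heq : F (∫ g, g • u ∂θ) = F u := le_antisymm hle (hmin _ hmemC)
  refine ⟨hmemC, ?_, fun v hv => heq ▸ hmin v hv, heq⟩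
  intro h
  let L : X →L[ℝ] X :=
    { toFun := fun x => h • x
      map_add' := smul_add h
      map_smul' := fun c x => smul_comm h c x
      cont := continuous_const.smul continuous_id }
  calc h • (∫ g, g • u ∂θ) = ∫ g, h • (g • u) ∂θ := (L.integral_comp_comm hint).symm
    _ = ∫ g, (h * g) • u ∂θ := by simp [mul_smul]
    _ = ∫ g, g • u ∂θ := integral_mul_left_eq_self (fun g => g • u) h
end

section
/- Let X be a real Banach space, C ⊆ X closed and convex, and G a compact topological group acting continuously on X by continuous linear maps, with each g ∈ G mapping C into C; let θ be the Haar probability measure on G. Let u ∈ C be a minimizer of F : X → ℝ over C with F(g·u) = F(u) for all g ∈ G, and suppose F is lower semi-continuous and convex on the closed convex hull K of the orbit G·u (i.e. F restricted to K is convex and lower semi-continuous). Then the G-average u_G := ∫_G g·u dθ(g) lies in C, is G-invariant, and is a minimizer of F over C. -/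
open MeasureTheory

/-- Let `X` be a real Banach space, `C ⊆ X` closed and convex, and `G` a compact
topological group acting continuously on `X` by continuous linear maps preserving `C`; let `θ` be
the Haar probability measure on `G`. Let `u ∈ C` minimize `F : X → ℝ` over `C` with
`F (g • u) = F u` for all `g`, and suppose `F` is lower semi-continuous and convex on the closed
convex hull `K` of the orbit `G • u`. Then the `G`-average `u_G := ∫_G g • u dθ(g)` lies in `C`,
is `G`-invariant, and is a minimizer of `F` over `C`. -/
theorem exists_invariant_minimizer_convexOnOrbitHull
    {X : Type*} [NormedAddCommGroup X] [NormedSpace ℝ X] [CompleteSpace X]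
    {G : Type*} [Group G] [TopologicalSpace G] [IsTopologicalGroup G] [CompactSpace G]
    [MeasurableSpace G] [BorelSpace G]
    [DistribMulAction G X] [SMulCommClass G ℝ X] [ContinuousSMul G X]
    (C : Set X) (hCclosed : IsClosed C) (hCconvex : Convex ℝ C)
    (hmaps : ∀ g : G, ∀ x ∈ C, g • x ∈ C)
    (θ : Measure G) [θ.IsHaarMeasure] [θ.IsMulRightInvariant] [IsProbabilityMeasure θ]
    (F : X → ℝ) (u : X) (huC : u ∈ C) (hmin : ∀ v ∈ C, F u ≤ F v)
    (hinv : ∀ g : G, F (g • u) = F u)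
    (K : Set X) (hK : K = closure (convexHull ℝ (Set.range fun g : G => g • u)))
    (hFconv : ConvexOn ℝ K F) (hFlsc : LowerSemicontinuousOn F K) :
    (∫ g, g • u ∂θ) ∈ C ∧
      (∀ h : G, h • (∫ g, g • u ∂θ) = ∫ g, g • u ∂θ) ∧
      (∀ v ∈ C, F (∫ g, g • u ∂θ) ≤ F v) := by
  have hcont : Continuous fun g : G => g • u := continuous_id.smul continuous_const
  have hfint : Integrable (fun g : G => g • u) θ := by
    rw [← integrableOn_univ]
    exact hcont.continuousOn.integrableOn_compact' isCompact_univ MeasurableSet.univ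
  set w := ∫ g, g • u ∂θ with hw
  have hhull : convexHull ℝ (Set.range fun g : G => g • u) ⊆ K := hK ▸ subset_closure
  have horb : ∀ g : G, g • u ∈ K := fun g =>
    hhull (subset_convexHull ℝ _ ⟨g, rfl⟩)
  have hKconv : Convex ℝ K := hK ▸ (convex_convexHull ℝ _).closure
  have hKclosed : IsClosed K := hK ▸ isClosed_closure
  have hwC : w ∈ C := hCconvex.integral_mem hCclosed (ae_of_all _ fun g => hmaps g u huC) hfint
  have hwK : w ∈ K := hKconv.integral_mem hKclosed (ae_of_all _ horb) hfint
  refine ⟨hwC, ?_, ?_⟩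
  · intro h
    let L : X →L[ℝ] X :=
      { toFun := fun x => h • x
        map_add' := smul_add h
        map_smul' := fun c x => smul_comm h c x
        cont := continuous_const_smul h }
    calc h • w = ∫ g, h • (g • u) ∂θ := (L.integral_comp_comm hfint).symm
    _ = ∫ g, (h * g) • u ∂θ := by simp [mul_smul]
    _ = ∫ g, g • u ∂θ := integral_mul_left_eq_self (μ := θ) (fun g : G => g • u) h
  · intro v hv
    have hsub : convexHull ℝ (Set.range fun g : G => g • u) ⊆ {x ∈ K | F x ≤ F u} := by
      apply convexHull_min
      · rintro x ⟨g, rfl⟩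
        exact ⟨horb g, (hinv g).le⟩
      · exact hFconv.convex_le (F u)
    have hle : F w ≤ F u := by
      by_contra hgt
      push_neg at hgt
      have hlsc := hFlsc w hwK (F u) hgt
      have hne : (nhdsWithin w (convexHull ℝ (Set.range fun g : G => g • u))).NeBot :=
        mem_closure_iff_nhdsWithin_neBot.mp (hK ▸ hwK)
      have hmono : nhdsWithin w (convexHull ℝ (Set.range fun g : G => g • u)) ≤ nhdsWithin w K :=
        nhdsWithin_mono w hhull
      have h1 : ∀ᶠ z in nhdsWithin w (convexHull ℝ (Set.range fun g : G => g • u)), F u < F z :=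
        hlsc.filter_mono hmono
      have h2 : ∀ᶠ z in nhdsWithin w (convexHull ℝ (Set.range fun g : G => g • u)),
          z ∈ convexHull ℝ (Set.range fun g : G => g • u) := self_mem_nhdsWithin
      obtain ⟨z, hz1, hz2⟩ := (h1.and h2).exists
      exact absurd (hsub hz2).2 (not_le.mpr hz1)
    exact hle.trans (hmin v hv)
end

section
/- Let X be a real Banach space, G a compact topological group acting continuously on X by continuous linear maps, θ the Haar probability measure on G, u ∈ X, and u_G := ∫_G g·u dθ(g). Let F : X → ℝ satisfy F(g·u) = F(u) for all g ∈ G, and suppose there is a continuous linear functional β* ∈ X* such that F(x) ≥ F(u_G) + β*(x − u_G) for all x in the orbit G·u. Then F(u_G) ≤ F(u). -/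
open MeasureTheory

/-- Let `X` be a real Banach space, `G` a compact topological group acting
continuously on `X` by continuous linear maps, `θ` the Haar probability measure on `G`, `u ∈ X`,
and `u_G := ∫_G g • u dθ(g)`. Let `F : X → ℝ` satisfy `F (g • u) = F u` for all `g ∈ G`, and
suppose there is a continuous linear functional `β* ∈ X*` such that
`F x ≥ F u_G + β* (x − u_G)` for all `x` in the orbit `G • u`. Then `F u_G ≤ F u`. -/
theorem gAverage_le_of_subgradient
    {X : Type*} [NormedAddCommGroup X] [NormedSpace ℝ X] [CompleteSpace X]
    {G : Type*} [Group G] [TopologicalSpace G] [IsTopologicalGroup G] [CompactSpace G]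
    [MeasurableSpace G] [BorelSpace G]
    [DistribMulAction G X] [SMulCommClass G ℝ X] [ContinuousSMul G X]
    (θ : Measure G) [θ.IsHaarMeasure] [IsProbabilityMeasure θ]
    (F : X → ℝ) (u : X)
    (hinv : ∀ g : G, F (g • u) = F u)
    (β : X →L[ℝ] ℝ)
    (hsub : ∀ x ∈ (Set.range fun g : G => g • u),
      F x ≥ F (∫ g, g • u ∂θ) + β (x - ∫ g, g • u ∂θ)) :
    F (∫ g, g • u ∂θ) ≤ F u := by
  set uG : X := ∫ g, g • u ∂θ with huG
  have hcont : Continuous fun g : G => g • u := by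
    exact continuous_id.smul continuous_const
  have hint : Integrable (fun g : G => g • u) θ :=
    hcont.integrable_of_hasCompactSupport (HasCompactSupport.of_compactSpace _)
  have hint2 : Integrable (fun g : G => (g • u) - uG) θ := hint.sub (integrable_const _)
  have hβint : Integrable (fun g : G => β ((g • u) - uG)) θ :=
    (β.integrable_comp hint2)
  have key : ∀ g : G, F uG + β ((g • u) - uG) ≤ F u := fun g => by
    have := hsub (g • u) ⟨g, rfl⟩
    rw [hinv g] at this
    exact this
  have hmono : (∫ g, (F uG + β ((g • u) - uG)) ∂θ) ≤ ∫ _g, F u ∂θ :=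
    integral_mono ((integrable_const _).add hβint) (integrable_const _) key
  have hleft : (∫ g, (F uG + β ((g • u) - uG)) ∂θ) = F uG := by
    rw [integral_add (integrable_const _) hβint, integral_const,
      β.integral_comp_comm hint2, integral_sub hint (integrable_const _),
      integral_const]
    simp [← huG]
  have hright : (∫ _g : G, F u ∂θ) = F u := by simp
  rw [hleft, hright] at hmono
  exact hmono
end
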